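/- Let Φ be a Young function in ∇₂ with constant k > 1. Then there is a constant C such that for every t > 0, (1/t)·Φ⁻¹(1/t)^{-1}·∫₀^t Φ⁻¹(1/s) ds ≤ C. -/

import Mathlib

open MeasureTheory ENNReal NNReal

noncomputable section

/-- A Young function `Φ : [0,∞] → [0,∞]`: increasing, convex, `Φ(0)=0`, `Φ(∞)=∞`,
`lim_{t→0}Φ(t)=0`, with `a(Φ)<∞` and `b(Φ)>0`. -/
structure YoungFunction (Φ : ℝ≥0∞ → ℝ≥0∞) : Prop where
  mono : Monotone Φ
  map_zero : Φ 0 = 0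
  map_top : Φ ⊤ = ⊤
  convex : ∀ (a b : ℝ≥0) (x y : ℝ≥0∞), a + b = 1 →
    Φ ((a : ℝ≥0∞) * x + (b : ℝ≥0∞) * y) ≤ (a : ℝ≥0∞) * Φ x + (b : ℝ≥0∞) * Φ y
  tendsto_zero : Filter.Tendsto Φ (nhdsWithin 0 (Set.Ioi 0)) (nhds 0)
  exists_pos : ∃ t : ℝ≥0∞, t ≠ ⊤ ∧ 0 < Φ t
  exists_finite : ∃ t : ℝ≥0∞, 0 < t ∧ Φ t < ⊤

/-- The generalized inverse `Φ⁻¹(u) = inf{t ≥ 0 : Φ(t) > u}` (with `inf ∅ = ∞`,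
so `Φ⁻¹(∞) = ∞`). -/
def yinv (Φ : ℝ≥0∞ → ℝ≥0∞) (u : ℝ≥0∞) : ℝ≥0∞ := sInf {t | u < Φ t}


lemma yinv_mono (Φ : ℝ≥0∞ → ℝ≥0∞) : Monotone (yinv Φ) := fun u v huv =>
  sInf_le_sInf fun t ht => lt_of_le_of_lt huv ht

lemma yinv_nabla (Φ : ℝ≥0∞ → ℝ≥0∞) (k : ℝ≥0) (hk : 1 < k)
    (hnabla : ∀ r : ℝ≥0∞, Φ r ≤ (1 / (2 * (k : ℝ≥0∞))) * Φ ((k : ℝ≥0∞) * r)) (u : ℝ≥0∞) :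
    yinv Φ (2 * (k : ℝ≥0∞) * u) ≤ (k : ℝ≥0∞) * yinv Φ u := by
  have hk0 : (k : ℝ≥0∞) ≠ 0 := by
    simp only [ne_eq, ENNReal.coe_eq_zero]
    exact (zero_lt_one.trans hk).ne'
  have hkt : (k : ℝ≥0∞) ≠ ⊤ := ENNReal.coe_ne_top
  have h2k0 : (2 * (k : ℝ≥0∞)) ≠ 0 := by simp [hk0]
  have h2kt : (2 * (k : ℝ≥0∞)) ≠ ⊤ := ENNReal.mul_ne_top (by norm_num) hkt
  have h1 : ∀ t ∈ {t | u < Φ t}, yinv Φ (2 * (k : ℝ≥0∞) * u) ≤ (k : ℝ≥0∞) * t := by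
    intro t ht
    refine sInf_le ?_
    have h2 : 2 * (k : ℝ≥0∞) * u < 2 * (k : ℝ≥0∞) * Φ t :=
      ENNReal.mul_lt_mul_right h2k0 h2kt ht
    have h3 : 2 * (k : ℝ≥0∞) * Φ t ≤ Φ ((k : ℝ≥0∞) * t) := by
      calc 2 * (k : ℝ≥0∞) * Φ t ≤ 2 * (k : ℝ≥0∞) * ((1 / (2 * (k : ℝ≥0∞))) * Φ ((k : ℝ≥0∞) * t)) :=
            mul_le_mul_right (hnabla t) _
        _ = Φ ((k : ℝ≥0∞) * t) := by
            rw [one_div, ← mul_assoc, ENNReal.mul_inv_cancel h2k0 h2kt, one_mul]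
    exact h2.trans_le h3
  have h4 : (k : ℝ≥0∞)⁻¹ * yinv Φ (2 * (k : ℝ≥0∞) * u) ≤ yinv Φ u := by
    refine le_sInf fun t ht => ?_
    calc (k : ℝ≥0∞)⁻¹ * yinv Φ (2 * (k : ℝ≥0∞) * u) ≤ (k : ℝ≥0∞)⁻¹ * ((k : ℝ≥0∞) * t) :=
          mul_le_mul_right (h1 t ht) _
      _ = t := by rw [← mul_assoc, ENNReal.inv_mul_cancel hk0 hkt, one_mul]
  calc yinv Φ (2 * (k : ℝ≥0∞) * u)
      = (k : ℝ≥0∞) * ((k : ℝ≥0∞)⁻¹ * yinv Φ (2 * (k : ℝ≥0∞) * u)) := by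
        rw [← mul_assoc, ENNReal.mul_inv_cancel hk0 hkt, one_mul]
    _ ≤ (k : ℝ≥0∞) * yinv Φ u := mul_le_mul_right h4 _

lemma yinv_nabla_pow (Φ : ℝ≥0∞ → ℝ≥0∞) (k : ℝ≥0) (hk : 1 < k)
    (hnabla : ∀ r : ℝ≥0∞, Φ r ≤ (1 / (2 * (k : ℝ≥0∞))) * Φ ((k : ℝ≥0∞) * r)) (u : ℝ≥0∞) :
    ∀ n : ℕ, yinv Φ ((2 * (k : ℝ≥0∞)) ^ n * u) ≤ (k : ℝ≥0∞) ^ n * yinv Φ u := by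
  intro n
  induction n with
  | zero => simp
  | succ n ih =>
    have : (2 * (k : ℝ≥0∞)) ^ (n + 1) * u = 2 * (k : ℝ≥0∞) * ((2 * (k : ℝ≥0∞)) ^ n * u) := by
      ring
    rw [this]
    calc yinv Φ (2 * (k : ℝ≥0∞) * ((2 * (k : ℝ≥0∞)) ^ n * u))
        ≤ (k : ℝ≥0∞) * yinv Φ ((2 * (k : ℝ≥0∞)) ^ n * u) := yinv_nabla Φ k hk hnabla _
      _ ≤ (k : ℝ≥0∞) * ((k : ℝ≥0∞) ^ n * yinv Φ u) := mul_le_mul_right ih _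
      _ = (k : ℝ≥0∞) ^ (n + 1) * yinv Φ u := by ring


/-- if `Φ ∈ ∇₂`, then `(1/t)Φ⁻¹(1/t)⁻¹ ∫₀ᵗ Φ⁻¹(1/s) ds` is bounded. -/
theorem stmt15 (Φ : ℝ≥0∞ → ℝ≥0∞) (hΦ : YoungFunction Φ) (k : ℝ≥0) (hk : 1 < k)
    (hnabla : ∀ r : ℝ≥0∞, Φ r ≤ (1 / (2 * (k : ℝ≥0∞))) * Φ ((k : ℝ≥0∞) * r)) :
    ∃ C : ℝ≥0∞, C ≠ ⊤ ∧ ∀ t : ℝ, 0 < t →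
      (ENNReal.ofReal t)⁻¹ * (yinv Φ (ENNReal.ofReal t)⁻¹)⁻¹ *
        (∫⁻ s in Set.Ioo (0 : ℝ) t, yinv Φ (ENNReal.ofReal s)⁻¹) ≤ C := by
  have hk0 : (k : ℝ≥0∞) ≠ 0 := by
    simp only [ne_eq, ENNReal.coe_eq_zero]; exact (zero_lt_one.trans hk).ne'
  have hkt : (k : ℝ≥0∞) ≠ ⊤ := ENNReal.coe_ne_top
  refine ⟨2 * (k : ℝ≥0∞), ENNReal.mul_ne_top (by norm_num) hkt, fun t ht => ?_⟩
  set T : ℝ≥0∞ := ENNReal.ofReal t with hT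
  have hT0 : T ≠ 0 := by simp [hT, ENNReal.ofReal_eq_zero, not_le, ht]
  have hTt : T ≠ ⊤ := ENNReal.ofReal_ne_top
  set Y : ℝ≥0∞ := yinv Φ T⁻¹ with hY
  -- the real ratio q = (2k)⁻¹
  set c : ℝ≥0 := 2 * k with hc
  have hc0 : c ≠ 0 := by positivity
  have hc1 : (1 : ℝ≥0) < c := by
    calc (1:ℝ≥0) < k := hk
      _ ≤ 2 * k := by rw [two_mul]; exact le_add_self
  set q : ℝ≥0 := c⁻¹ with hq
  have hq0 : (0:ℝ) < (q : ℝ) := by positivity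
  have hq1 : (q : ℝ) < 1 := by
    rw [hq]
    push_cast
    rw [inv_lt_one_iff₀]
    right
    exact_mod_cast hc1
  -- the dyadic-type intervals
  set I : ℕ → Set ℝ := fun n => Set.Ioc (t * (q:ℝ) ^ (n+1)) (t * (q:ℝ) ^ n) with hI
  -- covering
  have hcov : Set.Ioo (0:ℝ) t ⊆ ⋃ n, I n := by
    intro s hs
    obtain ⟨hs0, hst⟩ := hs
    have hP : ∃ m : ℕ, t * (q:ℝ) ^ m < s := by
      obtain ⟨m, hm⟩ := exists_pow_lt_of_lt_one (div_pos hs0 ht) hq1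
      exact ⟨m, by rw [mul_comm]; exact (lt_div_iff₀ ht).1 hm⟩
    classical
    set N := Nat.find hP with hN
    have hNs : t * (q:ℝ) ^ N < s := Nat.find_spec hP
    have hN0 : N ≠ 0 := by
      intro h
      rw [h] at hNs
      simp at hNs
      linarith
    obtain ⟨n, hn⟩ : ∃ n, N = n + 1 := ⟨N - 1, (Nat.succ_pred_eq_of_pos (Nat.pos_of_ne_zero hN0)).symm⟩
    refine Set.mem_iUnion.2 ⟨n, ?_, ?_⟩
    · rw [← hn]; exact hNs
    · have := Nat.find_min hP (by omega : n < N)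
      linarith [not_lt.1 this]
  -- pointwise bound on each interval
  have hbound : ∀ n : ℕ, ∀ s ∈ I n,
      yinv Φ (ENNReal.ofReal s)⁻¹ ≤ (k : ℝ≥0∞) ^ (n+1) * Y := by
    intro n s hs
    have h1 : ENNReal.ofReal (t * (q:ℝ) ^ (n+1)) ≤ ENNReal.ofReal s :=
      ENNReal.ofReal_le_ofReal hs.1.le
    have h2 : ENNReal.ofReal (t * (q:ℝ) ^ (n+1)) = T * ((2 * (k:ℝ≥0∞))⁻¹) ^ (n+1) := by
      rw [ENNReal.ofReal_mul ht.le, ← hT]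
      congr 1
      rw [show ((q:ℝ)) ^ (n+1) = ((q ^ (n+1) : ℝ≥0) : ℝ) by push_cast; ring,
        ENNReal.ofReal_coe_nnreal, ENNReal.coe_pow, hq, ENNReal.coe_inv hc0, hc]
      push_cast
      ring
    have h3 : (ENNReal.ofReal s)⁻¹ ≤ (2 * (k:ℝ≥0∞)) ^ (n+1) * T⁻¹ := by
      have := ENNReal.inv_le_inv.2 (h2 ▸ h1)
      rw [ENNReal.mul_inv (Or.inl hT0) (Or.inl hTt)] at this
      · rw [mul_comm]
        calc (ENNReal.ofReal s)⁻¹ ≤ T⁻¹ * (((2 * (k:ℝ≥0∞))⁻¹) ^ (n+1))⁻¹ := this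
          _ = T⁻¹ * (2 * (k:ℝ≥0∞)) ^ (n+1) := by rw [← ENNReal.inv_pow, inv_inv]
    calc yinv Φ (ENNReal.ofReal s)⁻¹ ≤ yinv Φ ((2 * (k:ℝ≥0∞)) ^ (n+1) * T⁻¹) :=
          yinv_mono Φ h3
      _ ≤ (k : ℝ≥0∞) ^ (n+1) * Y := yinv_nabla_pow Φ k hk hnabla _ _
  -- volume bound
  have hvol : ∀ n : ℕ, volume (I n) ≤ T * ((2 * (k:ℝ≥0∞))⁻¹) ^ n := by
    intro n
    rw [hI]
    simp only [Real.volume_Ioc]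
    calc ENNReal.ofReal (t * (q:ℝ)^n - t * (q:ℝ)^(n+1)) ≤ ENNReal.ofReal (t * (q:ℝ)^n) :=
          ENNReal.ofReal_le_ofReal (by nlinarith [pow_pos hq0 (n+1)])
      _ = T * ((2 * (k:ℝ≥0∞))⁻¹) ^ n := by
          rw [ENNReal.ofReal_mul ht.le, ← hT]
          congr 1
          rw [show ((q:ℝ)) ^ n = ((q ^ n : ℝ≥0) : ℝ) by push_cast; ring,
            ENNReal.ofReal_coe_nnreal, ENNReal.coe_pow, hq, ENNReal.coe_inv hc0, hc]
          push_cast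
          ring
  -- integral bound
  have hint : (∫⁻ s in Set.Ioo (0 : ℝ) t, yinv Φ (ENNReal.ofReal s)⁻¹)
      ≤ 2 * (k : ℝ≥0∞) * Y * T := by
    calc (∫⁻ s in Set.Ioo (0 : ℝ) t, yinv Φ (ENNReal.ofReal s)⁻¹)
        ≤ ∫⁻ s in ⋃ n, I n, yinv Φ (ENNReal.ofReal s)⁻¹ := lintegral_mono_set hcov
      _ ≤ ∑' n, ∫⁻ s in I n, yinv Φ (ENNReal.ofReal s)⁻¹ := lintegral_iUnion_le _ _
      _ ≤ ∑' n, ((k : ℝ≥0∞) ^ (n+1) * Y) * (T * ((2 * (k:ℝ≥0∞))⁻¹) ^ n) := by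
          refine ENNReal.tsum_le_tsum fun n => ?_
          calc (∫⁻ s in I n, yinv Φ (ENNReal.ofReal s)⁻¹)
              ≤ ∫⁻ _ in I n, (k : ℝ≥0∞) ^ (n+1) * Y :=
                setLIntegral_mono measurable_const (hbound n)
            _ = ((k : ℝ≥0∞) ^ (n+1) * Y) * volume (I n) := setLIntegral_const _ _
            _ ≤ ((k : ℝ≥0∞) ^ (n+1) * Y) * (T * ((2 * (k:ℝ≥0∞))⁻¹) ^ n) :=
                mul_le_mul_right (hvol n) _
      _ = ((k : ℝ≥0∞) * Y * T) * ∑' n, ((k : ℝ≥0∞) * (2 * (k:ℝ≥0∞))⁻¹) ^ n := by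
          have heq : ∀ n : ℕ, ((k : ℝ≥0∞) ^ (n+1) * Y) * (T * ((2 * (k:ℝ≥0∞))⁻¹) ^ n)
              = ((k : ℝ≥0∞) * Y * T) * (((k : ℝ≥0∞) * (2 * (k:ℝ≥0∞))⁻¹) ^ n) := by
            intro n
            rw [mul_pow, pow_succ]
            ring
          rw [tsum_congr heq, ENNReal.tsum_mul_left]
      _ = 2 * (k : ℝ≥0∞) * Y * T := by
          have hkq : (k : ℝ≥0∞) * (2 * (k:ℝ≥0∞))⁻¹ = 2⁻¹ := by
            rw [ENNReal.mul_inv (Or.inl (by norm_num)) (Or.inl (by norm_num)),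
              mul_comm ((2:ℝ≥0∞))⁻¹, ← mul_assoc, ENNReal.mul_inv_cancel hk0 hkt, one_mul]
          rw [hkq, ENNReal.tsum_geometric]
          rw [show (1 : ℝ≥0∞) - 2⁻¹ = 2⁻¹ by
            rw [ENNReal.sub_eq_of_eq_add (by norm_num)]
            rw [ENNReal.inv_two_add_inv_two]]
          rw [inv_inv]
          ring
  -- conclusion
  calc T⁻¹ * Y⁻¹ * (∫⁻ s in Set.Ioo (0 : ℝ) t, yinv Φ (ENNReal.ofReal s)⁻¹)
      ≤ T⁻¹ * Y⁻¹ * (2 * (k : ℝ≥0∞) * Y * T) := mul_le_mul_right hint _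
    _ = 2 * (k : ℝ≥0∞) * (T⁻¹ * T) * (Y⁻¹ * Y) := by ring
    _ ≤ 2 * (k : ℝ≥0∞) * 1 * 1 := by
        have hYY : Y⁻¹ * Y ≤ 1 := by
          rcases eq_or_ne Y 0 with h | h
          · simp [h]
          rcases eq_or_ne Y ⊤ with h' | h'
          · simp [h']
          · rw [ENNReal.inv_mul_cancel h h']
        rw [ENNReal.inv_mul_cancel hT0 hTt]
        exact mul_le_mul' (mul_le_mul_right le_rfl _) hYY
    _ = 2 * (k : ℝ≥0∞) := by ring
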